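/- For every m ∈ ℕ and every k ∈ ℕ with k ≤ 2^m, the Euler iterate satisfies |X^m_k − x₀| ≤ M·(a·k/2^m) ≤ M·a; in particular the point (a·k/2^m, X^m_k) lies in U. -/

import Mathlib

open Filter Topology Set

/-- For every m and k ≤ 2^m, the Euler iterate satisfies
|X^m_k − x₀| ≤ M·(a·k/2^m) ≤ M·a; in particular (a·k/2^m, X^m_k) ∈ U. -/
theorem euler_iterates_in_U
    (a M L x₀ : ℝ) (ha : 0 < a) (hM : 0 < M) (hL : 0 < L)
    (U : Set (ℝ × ℝ))
    (hU : U = Set.Icc (0 : ℝ) a ×ˢ Set.Icc (x₀ - M * a) (x₀ + M * a))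
    (f : ℝ × ℝ → ℝ)
    (hf_lip : ∀ u ∈ U, ∀ v ∈ U, |f u - f v| ≤ L * (|u.1 - v.1| + |u.2 - v.2|))
    (hf_bdd : ∀ u ∈ U, |f u| ≤ M)
    (X : ℕ → ℕ → ℝ)
    (hX0 : ∀ m, X m 0 = x₀)
    (hXs : ∀ m k, X m (k + 1) = X m k + a / 2 ^ m * f (a * k / 2 ^ m, X m k)) :
    ∀ m k : ℕ, k ≤ 2 ^ m →
      |X m k - x₀| ≤ M * (a * k / 2 ^ m) ∧
      M * (a * k / 2 ^ m) ≤ M * a ∧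
      (a * k / 2 ^ m, X m k) ∈ U := by
  intro m k
  induction k with
  | zero =>
    intro _
    have h2 : (0:ℝ) < 2 ^ m := by positivity
    refine ⟨?_, ?_, ?_⟩
    · simp [hX0]
    · simp
      positivity
    · rw [hU]
      refine ⟨⟨?_, ?_⟩, ?_⟩
      · simp
      · simp; positivity
      · simp only [Set.mem_Icc, hX0]
        constructor <;> nlinarith
  | succ k ih =>
    intro hk
    have hk' : k ≤ 2 ^ m := Nat.le_of_succ_le hk
    obtain ⟨h1, h2, h3⟩ := ih hk'
    have h2m : (0:ℝ) < 2 ^ m := by positivity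
    have hkle : ((k:ℝ)+1) ≤ 2 ^ m := by exact_mod_cast hk
    have hfb : |f (a * k / 2 ^ m, X m k)| ≤ M := hf_bdd _ h3
    have hstep : |X m (k+1) - x₀| ≤ M * (a * (k+1) / 2 ^ m) := by
      rw [hXs]
      have : X m k + a / 2 ^ m * f (a * ↑k / 2 ^ m, X m k) - x₀
          = (X m k - x₀) + a / 2 ^ m * f (a * ↑k / 2 ^ m, X m k) := by ring
      rw [this]
      calc |(X m k - x₀) + a / 2 ^ m * f (a * ↑k / 2 ^ m, X m k)|
          ≤ |X m k - x₀| + |a / 2 ^ m * f (a * ↑k / 2 ^ m, X m k)| := abs_add_le _ _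
        _ ≤ M * (a * k / 2 ^ m) + a / 2 ^ m * M := by
            have : |a / 2 ^ m * f (a * ↑k / 2 ^ m, X m k)|
                = a / 2 ^ m * |f (a * ↑k / 2 ^ m, X m k)| := by
              rw [abs_mul, abs_of_pos (by positivity : (0:ℝ) < a / 2 ^ m)]
            rw [this]
            have := mul_le_mul_of_nonneg_left hfb (by positivity : (0:ℝ) ≤ a / 2 ^ m)
            linarith
        _ = M * (a * (↑k+1) / 2 ^ m) := by field_simp
    have hle : M * (a * ((k:ℝ)+1) / 2 ^ m) ≤ M * a := by
      apply mul_le_mul_of_nonneg_left _ hM.le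
      rw [div_le_iff₀ h2m]
      nlinarith
    have hcast : ((k+1 : ℕ) : ℝ) = (k:ℝ) + 1 := by push_cast; ring
    rw [hcast]
    refine ⟨hstep, hle, ?_⟩
    rw [hU]
    constructor
    · constructor
      · have : (0:ℝ) ≤ (k:ℝ)+1 := by positivity
        positivity
      · simp only
        rw [div_le_iff₀ h2m]
        nlinarith
    · simp only [Set.mem_Icc]
      have := abs_le.mp hstep
      constructor <;> nlinarith
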